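/- Let T : S_n(ℝ) → S_n(ℝ) be a linear transformation such that T(A) is positive definite whenever A is positive definite, and such that T(E_kk) = E_kk for every k = 1, …, n. Fix i ≠ j and set A = T(E_ij + E_ji). Then for every vector y = (y_1, …, y_n) ∈ ℝ^n with y_i = 0, one has ⟨A y, y⟩ = 0. -/

import Mathlib

open Matrix

/-- The space `Sₙ(ℝ)` of `n × n` real symmetric matrices, as a submodule of the space of
all `n × n` real matrices. -/
def SymMat (n : ℕ) : Submodule ℝ (Matrix (Fin n) (Fin n) ℝ) where
  carrier := {A | A.IsSymm}
  add_mem' := fun ha hb => ha.add hb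
  zero_mem' := by simp [Matrix.IsSymm]
  smul_mem' := fun c _ hA => hA.smul c

/-- The matrix unit `E_ii`, as an element of `Sₙ(ℝ)`. -/
def symE (n : ℕ) (i : Fin n) : SymMat n :=
  ⟨Matrix.single i i 1,
    Matrix.IsSymm.ext fun a b => by simp [Matrix.single, and_comm]⟩

/-- The symmetric matrix `E_ij + E_ji`, as an element of `Sₙ(ℝ)`. -/
def symEE (n : ℕ) (i j : Fin n) : SymMat n :=
  ⟨Matrix.single i j 1 + Matrix.single j i 1,
    Matrix.IsSymm.ext fun a b => by
      simp only [Matrix.add_apply, Matrix.single, Matrix.of_apply]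
      by_cases hia : i = a <;> by_cases hjb : j = b <;> by_cases hja : j = a <;>
        by_cases hib : i = b <;> simp_all⟩

lemma quad_std {n : ℕ} (i j : Fin n) (x : Fin n → ℝ) :
    x ⬝ᵥ ((Matrix.single i j 1 : Matrix (Fin n) (Fin n) ℝ) *ᵥ x) = x i * x j := by
  rw [Matrix.single_mulVec]
  simp [dotProduct, Function.update_apply, Finset.sum_ite_eq']

lemma sum_mulVec' {n : ℕ} (M : Fin n → Matrix (Fin n) (Fin n) ℝ) (x : Fin n → ℝ) :
    x ⬝ᵥ ((∑ k, M k) *ᵥ x) = ∑ k, x ⬝ᵥ (M k *ᵥ x) := by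
  classical
  induction (Finset.univ : Finset (Fin n)) using Finset.induction with
  | empty => simp [Matrix.zero_mulVec]
  | insert _ _ h ih => simp [Finset.sum_insert h, Matrix.add_mulVec, dotProduct_add, ih]

lemma pd_aux {n : ℕ} (i j : Fin n) (_hij : i ≠ j) (ε : ℝ) (hε : 0 < ε) (c : ℝ)
    (hc : c = 1 ∨ c = -1) :
    (((2/ε) • symE n i + ε • (∑ k, symE n k) + c • symEE n i j : SymMat n) :
      Matrix (Fin n) (Fin n) ℝ).PosDef := by
  rw [Matrix.posDef_iff_dotProduct_mulVec]
  constructor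
  · rw [Matrix.IsHermitian, Matrix.conjTranspose_eq_transpose_of_trivial]
    exact (((2/ε) • symE n i + ε • (∑ k, symE n k) + c • symEE n i j : SymMat n)).2
  · intro x hx
    have hquad : ∀ M N : SymMat n, ∀ a b : ℝ, x ⬝ᵥ (((a • M + b • N : SymMat n) :
        Matrix (Fin n) (Fin n) ℝ) *ᵥ x) = a * (x ⬝ᵥ ((M : Matrix (Fin n) (Fin n) ℝ) *ᵥ x))
        + b * (x ⬝ᵥ ((N : Matrix (Fin n) (Fin n) ℝ) *ᵥ x)) := by
      intro M N a b
      simp [Matrix.add_mulVec, Matrix.smul_mulVec, dotProduct_add, dotProduct_smul,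
        smul_eq_mul]
    have key : x ⬝ᵥ ((((2/ε) • symE n i + ε • (∑ k, symE n k) + c • symEE n i j : SymMat n) :
        Matrix (Fin n) (Fin n) ℝ) *ᵥ x)
        = (2/ε) * (x i * x i) + ε * (∑ k, x k * x k) + c * (x i * x j + x j * x i) := by
      push_cast
      simp only [Matrix.add_mulVec, Matrix.smul_mulVec, dotProduct_add, dotProduct_smul,
        smul_eq_mul]
      rw [sum_mulVec', Finset.mul_sum]
      simp only [symE, symEE, Submodule.coe_add, Matrix.add_mulVec, dotProduct_add, quad_std]
      rw [Finset.mul_sum]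
    rw [star_trivial, key]
    have hS : 0 < ∑ k, x k * x k := by
      rcases Function.ne_iff.mp hx with ⟨a, ha⟩
      exact Finset.sum_pos' (fun k _ => mul_self_nonneg _)
        ⟨a, Finset.mem_univ a, mul_self_pos.mpr ha⟩
    have hj : x j * x j ≤ ∑ k, x k * x k :=
      Finset.single_le_sum (fun k _ => mul_self_nonneg (x k)) (Finset.mem_univ j)
    have hjS := mul_le_mul_of_nonneg_left hj (le_of_lt (half_pos hε))
    have hεS := mul_pos hε hS
    rcases hc with rfl | rfl
    · have h2 := mul_nonneg (by positivity : (0:ℝ) ≤ 1/(2*ε)) (sq_nonneg (2 * x i + ε * x j))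
      have heq : (1/(2*ε)) * (2 * x i + ε * x j)^2
          = (2/ε)*(x i * x i) + 2*(x i * x j) + (ε/2)*(x j * x j) := by
        field_simp; ring
      rw [heq] at h2
      nlinarith [h2, hjS, hεS]
    · have h2 := mul_nonneg (by positivity : (0:ℝ) ≤ 1/(2*ε)) (sq_nonneg (2 * x i - ε * x j))
      have heq : (1/(2*ε)) * (2 * x i - ε * x j)^2
          = (2/ε)*(x i * x i) - 2*(x i * x j) + (ε/2)*(x j * x j) := by
        field_simp; ring
      rw [heq] at h2
      nlinarith [h2, hjS, hεS]

lemma quad_comp {n : ℕ} (i : Fin n) (B : SymMat n) (a e c : ℝ) (x : Fin n → ℝ) :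
    x ⬝ᵥ (((a • symE n i + e • (∑ k, symE n k) + c • B : SymMat n) :
      Matrix (Fin n) (Fin n) ℝ) *ᵥ x)
    = a * (x i * x i) + e * (∑ k, x k * x k) + c * (x ⬝ᵥ ((B : Matrix (Fin n) (Fin n) ℝ) *ᵥ x)) := by
  push_cast
  simp only [Matrix.add_mulVec, Matrix.smul_mulVec, dotProduct_add, dotProduct_smul,
    smul_eq_mul]
  rw [sum_mulVec', Finset.mul_sum]
  simp only [symE, quad_std, Finset.mul_sum]

/-- Let `T : Sₙ(ℝ) → Sₙ(ℝ)` be linear, preserving positive definiteness,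
with `T(E_kk) = E_kk` for all `k`.  Fix `i ≠ j` and set `A = T(E_ij + E_ji)`.  Then for
every `y ∈ ℝⁿ` with `y i = 0` one has `⟨A y, y⟩ = 0`. -/
theorem stmt14 (n : ℕ) (T : SymMat n →ₗ[ℝ] SymMat n)
    (hT : ∀ A : SymMat n, (A : Matrix (Fin n) (Fin n) ℝ).PosDef →
      ((T A : Matrix (Fin n) (Fin n) ℝ)).PosDef)
    (hE : ∀ k : Fin n, T (symE n k) = symE n k)
    (i j : Fin n) (hij : i ≠ j)
    (A : Matrix (Fin n) (Fin n) ℝ) (hA : A = (T (symEE n i j) : Matrix (Fin n) (Fin n) ℝ)) :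
    ∀ y : Fin n → ℝ, y i = 0 → y ⬝ᵥ (A *ᵥ y) = 0 := by
  intro y hyi
  by_cases hy0 : y = 0
  · simp [hy0]
  set q := y ⬝ᵥ (A *ᵥ y) with hq
  set S := ∑ k, y k * y k with hSdef
  have hS : 0 < S := by
    rcases Function.ne_iff.mp hy0 with ⟨a, ha⟩
    exact Finset.sum_pos' (fun k _ => mul_self_nonneg _)
      ⟨a, Finset.mem_univ a, mul_self_pos.mpr ha⟩
  have hkey : ∀ ε : ℝ, 0 < ε → ∀ c : ℝ, c = 1 ∨ c = -1 → 0 < ε * S + c * q := by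
    intro ε hε c hc
    have hpd := hT _ (pd_aux i j hij ε hε c hc)
    have hTM : T ((2/ε) • symE n i + ε • (∑ k, symE n k) + c • symEE n i j)
        = (2/ε) • symE n i + ε • (∑ k, symE n k) + c • T (symEE n i j) := by
      rw [map_add, map_add, LinearMap.map_smul, LinearMap.map_smul, LinearMap.map_smul,
        map_sum]
      simp only [hE]
    rw [hTM] at hpd
    have h := hpd.dotProduct_mulVec_pos hy0
    rw [star_trivial, quad_comp, ← hA, hyi] at h
    simpa using h
  have hge : 0 ≤ q := by
    by_contra h
    push_neg at h
    have hε : 0 < -q / (2 * S) := div_pos (neg_pos.mpr h) (by positivity)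
    have h1 := hkey _ hε 1 (Or.inl rfl)
    have h2 : (-q / (2 * S)) * S = -q / 2 := by
      field_simp
    rw [h2] at h1
    linarith
  have hle : q ≤ 0 := by
    by_contra h
    push_neg at h
    have hε : 0 < q / (2 * S) := div_pos h (by positivity)
    have h1 := hkey _ hε (-1) (Or.inr rfl)
    have h2 : (q / (2 * S)) * S = q / 2 := by
      field_simp
    rw [h2] at h1
    linarith
  linarith
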